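/- arXiv:2302.08184 — 3 statements merged into one kernel-verified Lean document; each statement's English description precedes it below -/
import Mathlib

section
/- Let f̃ : ℝ² → ℝ² be a lift of a torus homeomorphism homotopic to the identity. If there exists v ∈ ℝ² ∖ {0} such that f̃ does not have bounded deviation from v, then sup_{n ∈ ℕ} d_n = +∞, where d_n is the diameter of f̃ⁿ([0,1]²). -/
open Metric Set Filter Topology

noncomputable section

abbrev E2 : Type := EuclideanSpace ℝ (Fin 2)

/-- The image in `ℝ²` of an integer vector. -/
def intVec (v : Fin 2 → ℤ) : E2 := WithLp.toLp 2 (fun i => (v i : ℝ))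

/-- `f` is a lift of a torus homeomorphism homotopic to the identity. -/
def IsLift (f : E2 → E2) : Prop :=
  ∀ (x : E2) (v : Fin 2 → ℤ), f (x + intVec v) = f x + intVec v

/-- Lift condition for a homeomorphism of the torus whose linear part is the
integer matrix `A`. -/
def IsLiftMat (f : E2 → E2) (A : Matrix (Fin 2) (Fin 2) ℤ) : Prop :=
  ∀ (x : E2) (v : Fin 2 → ℤ), f (x + intVec v) = f x + intVec (A.mulVec v)

/-- Lift condition for a homeomorphism homotopic to the Dehn twist with matrix
`[[1,k₀],[0,1]]`. -/
def IsDehnLift (f : E2 → E2) (k₀ : ℤ) : Prop :=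
  (∀ x : E2, f (x + intVec ![1, 0]) = f x + intVec ![1, 0]) ∧
  (∀ x : E2, f (x + intVec ![0, 1]) = f x + intVec ![k₀, 1])

/-- The fundamental domain `D = [0,1] × [0,1]`. -/
def Dom : Set E2 := {x | x 0 ∈ Icc (0:ℝ) 1 ∧ x 1 ∈ Icc (0:ℝ) 1}

/-- `d_n`, the diameter of `f̃ⁿ(D)`. -/
def dn (f : E2 → E2) (n : ℕ) : ℝ := Metric.diam (f^[n] '' Dom)

/-- `A_n = d_n⁻¹ • (f̃ⁿ(D) − f̃ⁿ(x₀))`. -/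
def An (f : E2 → E2) (x₀ : E2) (n : ℕ) : Set E2 :=
  (fun y => (dn f n)⁻¹ • (y - f^[n] x₀)) '' (f^[n] '' Dom)

/-- A good limit value of the sequence `(A_n)`: a compact set which is the
Hausdorff limit of a subsequence `(A_{n_k})` with `d_{n_k} → +∞`. -/
def IsGoodLimit (f : E2 → E2) (x₀ : E2) (A : Set E2) : Prop :=
  IsCompact A ∧ ∃ nk : ℕ → ℕ, StrictMono nk ∧
    Tendsto (fun k => dn f (nk k)) atTop atTop ∧
    Tendsto (fun k => Metric.hausdorffDist (An f x₀ (nk k)) A) atTop (nhds 0)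

/-- A vector of irrational slope: nonzero and not a real multiple of a nonzero
integer vector. -/
def IrrationalSlope (u : E2) : Prop :=
  u ≠ 0 ∧ ¬∃ (t : ℝ) (w : Fin 2 → ℤ), w ≠ 0 ∧ u = t • intVec w

/-- `f` has bounded deviation from direction `v`. -/
def BoundedDeviation (f : E2 → E2) (v : E2) : Prop :=
  ∃ (ρ : E2) (M : ℝ), 0 ≤ M ∧
    ∀ (x : E2) (n : ℕ), |(inner ℝ (f^[n] x - x - (n : ℝ) • ρ) v : ℝ)| ≤ M

/-- The rotation set of `f`. -/
def rotSet (f : E2 → E2) : Set E2 :=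
  {w | ∃ (y : ℕ → E2) (m : ℕ → ℕ), Tendsto m atTop atTop ∧
    Tendsto (fun k => (m k : ℝ)⁻¹ • (f^[m k] (y k) - y k)) atTop (nhds w)}

/-- The line `ℝ•u` through the origin. -/
def lineThrough (u : E2) : Set E2 := {x | ∃ t : ℝ, x = t • u}

lemma isLift_iterate {f : E2 → E2} (hf : IsLift f) (n : ℕ) (x : E2) (w : Fin 2 → ℤ) :
    f^[n] (x + intVec w) = f^[n] x + intVec w := by
  induction n generalizing x with
  | zero => simp
  | succ n ih => rw [Function.iterate_succ_apply, hf, ih, Function.iterate_succ_apply]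

lemma exists_frac (x : E2) : ∃ w : Fin 2 → ℤ, x - intVec w ∈ Dom := by
  refine ⟨fun i => ⌊x i⌋, ?_, ?_⟩ <;>
  · rw [PiLp.sub_apply]
    show x _ - ((⌊x _⌋ : ℤ) : ℝ) ∈ Icc (0:ℝ) 1
    rw [Int.self_sub_floor]
    exact ⟨Int.fract_nonneg _, (Int.fract_lt_one _).le⟩

lemma zero_mem_Dom : (0 : E2) ∈ Dom := by
  constructor <;> · show (0:ℝ) ∈ Icc (0:ℝ) 1; simp

lemma norm_le_of_mem_Dom {y : E2} (hy : y ∈ Dom) : ‖y‖ ≤ 2 := by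
  obtain ⟨h0, h1⟩ := hy
  rw [EuclideanSpace.norm_eq]
  have hs : ∑ i, ‖y i‖ ^ 2 ≤ 4 := by
    rw [Fin.sum_univ_two, Real.norm_eq_abs, Real.norm_eq_abs, sq_abs, sq_abs]
    nlinarith [h0.1, h0.2, h1.1, h1.2]
  calc Real.sqrt (∑ i, ‖y i‖ ^ 2) ≤ Real.sqrt 4 := Real.sqrt_le_sqrt hs
    _ = 2 := by rw [show (4:ℝ) = 2 ^ 2 by norm_num, Real.sqrt_sq (by norm_num)]

lemma isCompact_Dom : IsCompact Dom := by
  apply Metric.isCompact_iff_isClosed_bounded.mpr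
  constructor
  · have : Dom = (fun x : E2 => x 0) ⁻¹' Icc 0 1 ∩ (fun x : E2 => x 1) ⁻¹' Icc 0 1 := rfl
    rw [this]
    exact (isClosed_Icc.preimage (EuclideanSpace.proj 0).continuous).inter
      (isClosed_Icc.preimage (EuclideanSpace.proj 1).continuous)
  · refine (Metric.isBounded_closedBall (x := (0:E2)) (r := 2)).subset fun y hy => ?_
    simpa [Metric.mem_closedBall, dist_zero_right] using norm_le_of_mem_Dom hy

lemma dist_le_dn (f : E2 ≃ₜ E2) (n : ℕ) {x y : E2} (hx : x ∈ Dom) (hy : y ∈ Dom) :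
    dist ((⇑f)^[n] x) ((⇑f)^[n] y) ≤ dn ⇑f n := by
  have hb : Bornology.IsBounded ((⇑f)^[n] '' Dom) :=
    (isCompact_Dom.image (f.continuous.iterate n)).isBounded
  exact Metric.dist_le_diam_of_mem hb ⟨x, hx, rfl⟩ ⟨y, hy, rfl⟩

lemma quasi_exists_lim (a : ℕ → ℝ) (C : ℝ) (hC : 0 ≤ C)
    (h : ∀ m n, |a (m + n) - a m - a n| ≤ C) :
    ∃ L : ℝ, ∀ n : ℕ, |a n - n * L| ≤ 2 * C := by
  have ha0 : |a 0| ≤ C := by simpa using h 0 0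
  have key : ∀ n k : ℕ, |a (k * n) - (k : ℝ) * a n| ≤ ((k : ℝ) + 1) * C := by
    intro n k
    induction k with
    | zero => simpa using ha0
    | succ k ih =>
      have e : (k + 1) * n = k * n + n := Nat.succ_mul k n
      rw [e]
      have h1 := h (k * n) n
      push_cast
      calc |a (k * n + n) - ((k : ℝ) + 1) * a n|
          = |(a (k * n + n) - a (k * n) - a n) + (a (k * n) - (k : ℝ) * a n)| := by ring_nf
        _ ≤ |a (k * n + n) - a (k * n) - a n| + |a (k * n) - (k : ℝ) * a n| := abs_add_le _ _
        _ ≤ C + ((k : ℝ) + 1) * C := add_le_add h1 ih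
        _ = ((k : ℝ) + 1 + 1) * C := by ring
  have hsub : Subadditive (fun n => a n + C) := by
    intro m n
    have := (abs_le.1 (h m n)).2
    dsimp only
    linarith
  have hbdd : BddBelow (Set.range fun n : ℕ => (a n + C) / n) := by
    refine ⟨-(|a 1| + 3 * C), ?_⟩
    rintro x ⟨n, rfl⟩
    rcases Nat.eq_zero_or_pos n with rfl | hn
    · simp only [Nat.cast_zero, div_zero]
      have : 0 ≤ |a 1| + 3 * C := by positivity
      linarith
    · have hnpos : (0:ℝ) < n := by exact_mod_cast hn
      rw [le_div_iff₀ hnpos]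
      have hk := key 1 n
      rw [Nat.mul_one] at hk
      have h1 := (abs_le.1 hk).1
      have hn1 : (1:ℝ) ≤ n := by exact_mod_cast hn
      nlinarith [neg_abs_le (a 1), abs_nonneg (a 1)]
  have hlim : Tendsto (fun n : ℕ => a n / n) atTop (nhds (hsub.lim - 0)) := by
    have h1 := hsub.tendsto_lim hbdd
    have h2 : Tendsto (fun n : ℕ => C / n) atTop (nhds 0) :=
      tendsto_const_div_atTop_nhds_zero_nat C
    have := h1.sub h2
    convert this using 2 with n
    ring
  set L := hsub.lim - 0 with hLdef
  refine ⟨L, fun n => ?_⟩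
  rcases Nat.eq_zero_or_pos n with rfl | hn
  · simp only [Nat.cast_zero, zero_mul, sub_zero]
    linarith
  · have hnpos : (0:ℝ) < n := by exact_mod_cast hn
    have hgt : Tendsto (fun k : ℕ => a (k * n) / ((k * n : ℕ) : ℝ)) atTop (nhds L) := by
      have hcomp : Tendsto (fun k : ℕ => k * n) atTop atTop :=
        tendsto_atTop_mono (fun k => Nat.le_mul_of_pos_right k hn) tendsto_id
      exact hlim.comp hcomp
    have hb : ∀ᶠ k in atTop, |a (k * n) / ((k * n : ℕ) : ℝ) - a n / n| ≤ 2 * C / n := by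
      filter_upwards [eventually_ge_atTop 1] with k hk
      have hkpos : (0:ℝ) < k := by exact_mod_cast hk
      have hk1 : (1:ℝ) ≤ k := by exact_mod_cast hk
      have heq : a (k * n) / ((k * n : ℕ) : ℝ) - a n / n
          = (a (k * n) - (k : ℝ) * a n) / ((k : ℝ) * n) := by
        push_cast
        field_simp
      rw [heq, abs_div, abs_of_pos (by positivity : (0:ℝ) < (k:ℝ) * n)]
      rw [div_le_div_iff₀ (by positivity) hnpos]
      have hkey := key n k
      nlinarith [mul_le_mul_of_nonneg_right hkey hnpos.le,
        mul_nonneg (mul_nonneg hC (sub_nonneg.2 hk1)) hnpos.le,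
        abs_nonneg (a (k * n) - (k : ℝ) * a n)]
    have habs : |L - a n / n| ≤ 2 * C / n :=
      le_of_tendsto ((hgt.sub_const (a n / n)).abs) hb
    have heq2 : a n - (n : ℝ) * L = (n : ℝ) * (a n / n - L) := by
      field_simp
    rw [heq2, abs_mul, abs_of_pos hnpos]
    have : |a n / n - L| ≤ 2 * C / n := by rwa [abs_sub_comm]
    calc (n : ℝ) * |a n / n - L| ≤ (n : ℝ) * (2 * C / n) := by
          exact mul_le_mul_of_nonneg_left this hnpos.le
      _ = 2 * C := by field_simp

/-- Lemma 2.1 (first part): if `f` has unbounded deviation in some direction,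
then the diameters `d_n` are unbounded. -/
theorem diam_unbounded_of_unbounded_deviation (f : E2 ≃ₜ E2) (hf : IsLift ⇑f)
    (v : E2) (hv : v ≠ 0) (hdev : ¬ BoundedDeviation ⇑f v) :
    ∀ M : ℝ, ∃ n : ℕ, M < dn ⇑f n := by
  by_contra hcon
  push_neg at hcon
  obtain ⟨M, hM⟩ := hcon
  apply hdev
  have hM0 : 0 ≤ M := le_trans Metric.diam_nonneg (hM 0)
  set a : ℕ → ℝ := fun n => (inner ℝ ((⇑f)^[n] 0) v : ℝ) with ha
  set C : ℝ := (M + 2) * ‖v‖ with hCdef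
  have hC : 0 ≤ C := by positivity
  have hquasi : ∀ m n : ℕ, |a (m + n) - a m - a n| ≤ C := by
    intro m n
    obtain ⟨w, hw⟩ := exists_frac ((⇑f)^[n] 0)
    set y : E2 := (⇑f)^[n] 0 - intVec w with hy
    have hyw : (⇑f)^[n] (0:E2) = y + intVec w := by rw [hy]; abel
    have h1 : (⇑f)^[m + n] (0:E2) = (⇑f)^[m] y + intVec w := by
      rw [Function.iterate_add_apply, hyw, isLift_iterate hf m y w]
    have h2 : a (m + n) - a m - a n
        = (inner ℝ ((⇑f)^[m] y - (⇑f)^[m] 0 - y) v : ℝ) := by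
      simp only [ha, h1]
      rw [inner_sub_left, inner_sub_left, inner_add_left, hyw, inner_add_left]
      ring
    rw [h2]
    calc |(inner ℝ ((⇑f)^[m] y - (⇑f)^[m] 0 - y) v : ℝ)|
        ≤ ‖(⇑f)^[m] y - (⇑f)^[m] 0 - y‖ * ‖v‖ := abs_real_inner_le_norm _ _
      _ ≤ (M + 2) * ‖v‖ := by
          have hn1 : ‖(⇑f)^[m] y - (⇑f)^[m] 0‖ ≤ M := by
            have := dist_le_dn f m hw zero_mem_Dom
            rw [dist_eq_norm] at this
            exact this.trans (hM m)
          have hn2 : ‖y‖ ≤ 2 := norm_le_of_mem_Dom hw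
          have : ‖(⇑f)^[m] y - (⇑f)^[m] 0 - y‖ ≤ M + 2 :=
            (norm_sub_le _ _).trans (add_le_add hn1 hn2)
          exact mul_le_mul_of_nonneg_right this (norm_nonneg v)
  obtain ⟨L, hL⟩ := quasi_exists_lim a C hC hquasi
  set ρ : E2 := (L / ‖v‖ ^ 2) • v with hρdef
  have hρ : (inner ℝ ρ v : ℝ) = L := by
    rw [hρdef, real_inner_smul_left, real_inner_self_eq_norm_sq]
    have : ‖v‖ ≠ 0 := norm_ne_zero_iff.2 hv
    field_simp
  refine ⟨ρ, (M + 2) * ‖v‖ + 2 * C, by positivity, fun x n => ?_⟩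
  obtain ⟨w, hw⟩ := exists_frac x
  set y : E2 := x - intVec w with hy
  have hxw : x = y + intVec w := by rw [hy]; abel
  have h1 : (⇑f)^[n] x - x = (⇑f)^[n] y - y := by
    rw [hxw, isLift_iterate hf n y w]; abel
  have hsplit : (inner ℝ ((⇑f)^[n] x - x - (n : ℝ) • ρ) v : ℝ)
      = ((inner ℝ ((⇑f)^[n] y - (⇑f)^[n] 0) v : ℝ) - (inner ℝ y v : ℝ)) + (a n - (n : ℝ) * L) := by
    rw [inner_sub_left, real_inner_smul_left, hρ, h1]
    rw [show (⇑f)^[n] y - y = ((⇑f)^[n] y - (⇑f)^[n] 0) - y + (⇑f)^[n] (0:E2) by abel]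
    rw [inner_add_left, inner_sub_left]
    simp only [ha]
    ring
  rw [hsplit]
  have hb1 : |(inner ℝ ((⇑f)^[n] y - (⇑f)^[n] 0) v : ℝ)| ≤ M * ‖v‖ := by
    calc |(inner ℝ ((⇑f)^[n] y - (⇑f)^[n] 0) v : ℝ)|
        ≤ ‖(⇑f)^[n] y - (⇑f)^[n] 0‖ * ‖v‖ := abs_real_inner_le_norm _ _
      _ ≤ M * ‖v‖ := by
          have := dist_le_dn f n hw zero_mem_Dom
          rw [dist_eq_norm] at this
          exact mul_le_mul_of_nonneg_right (this.trans (hM n)) (norm_nonneg v)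
  have hb2 : |(inner ℝ y v : ℝ)| ≤ 2 * ‖v‖ := by
    calc |(inner ℝ y v : ℝ)| ≤ ‖y‖ * ‖v‖ := abs_real_inner_le_norm _ _
      _ ≤ 2 * ‖v‖ := mul_le_mul_of_nonneg_right (norm_le_of_mem_Dom hw) (norm_nonneg v)
  calc |((inner ℝ ((⇑f)^[n] y - (⇑f)^[n] 0) v : ℝ) - (inner ℝ y v : ℝ)) + (a n - (n : ℝ) * L)|
      ≤ |(inner ℝ ((⇑f)^[n] y - (⇑f)^[n] 0) v : ℝ) - (inner ℝ y v : ℝ)| + |a n - (n : ℝ) * L| :=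
        abs_add_le _ _
    _ ≤ (|(inner ℝ ((⇑f)^[n] y - (⇑f)^[n] 0) v : ℝ)| + |(inner ℝ y v : ℝ)|) + 2 * C :=
        add_le_add (abs_sub _ _) (hL n)
    _ ≤ (M * ‖v‖ + 2 * ‖v‖) + 2 * C := by gcongr
    _ = (M + 2) * ‖v‖ + 2 * C := by ring
end
end

section
/- Let M ≥ 0 and C ≥ 0 be real numbers. Let γ₂ : [0,1] → ℝ² be a continuous path from (−M, 0) to (M, 0) whose image is contained in [−M, M] × [−C, C]. Let γ₁ : [0,1] → ℝ² be a continuous path from a point (a⁻, b⁻) to a point (a⁺, b⁺) whose image is contained in (−M, M) × ℝ, with b⁻ < −C and b⁺ > C. Then the images of γ₁ and γ₂ intersect. -/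
open Set Complex

private lemma pmi_corner {x a b : ℝ}
    (h1 : x ∈ Ioo (a - Real.pi/2) (a + Real.pi/2))
    (h2 : x ∈ Ioo (b - Real.pi/2) (b + Real.pi/2)) : |a - b| < Real.pi := by
  obtain ⟨h1l, h1r⟩ := h1; obtain ⟨h2l, h2r⟩ := h2
  rw [abs_sub_lt_iff]; constructor <;> linarith

private lemma pmi_cos_pos_mem {x : ℝ} (c : ℝ) (h : 0 < Real.cos (x - c)) :
    ∃ k : ℤ, x ∈ Ioo (c + 2*k*Real.pi - Real.pi/2) (c + 2*k*Real.pi + Real.pi/2) := by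
  have hπ := Real.pi_pos
  set k : ℤ := round ((x - c) / (2 * Real.pi)) with hk
  have h1 : |(x - c) / (2 * Real.pi) - k| ≤ 1/2 := abs_sub_round _
  have key : x - c - 2*k*Real.pi = ((x-c)/(2*Real.pi) - k) * (2*Real.pi) := by
    field_simp
  rw [abs_le] at h1
  have h2 : |x - c - 2*k*Real.pi| ≤ Real.pi := by
    rw [key, abs_le]; constructor <;> nlinarith
  have hcos : Real.cos (x - c - k * (2 * Real.pi)) = Real.cos (x - c) :=
    Real.cos_sub_int_mul_two_pi _ _
  have h3 : |x - c - 2*k*Real.pi| < Real.pi / 2 := by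
    by_contra hcon
    push_neg at hcon
    have : Real.cos (x - c - 2*k*Real.pi) ≤ 0 := by
      rw [← Real.cos_abs]
      exact Real.cos_nonpos_of_pi_div_two_le_of_le hcon (by linarith [abs_le.mp h2])
    rw [show x - c - 2*k*Real.pi = x - c - k * (2*Real.pi) by ring, hcos] at this
    linarith
  rw [abs_lt] at h3
  exact ⟨k, by constructor <;> [linarith [h3.1]; linarith [h3.2]]⟩

private lemma pmi_edge {h : unitInterval → ℝ} (hc : Continuous h) (c : ℝ)
    (hcos : ∀ x, 0 < Real.cos (h x - c)) :
    ∃ k : ℤ, ∀ x, h x ∈ Ioo (c + 2*k*Real.pi - Real.pi/2) (c + 2*k*Real.pi + Real.pi/2) := by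
  have hπ := Real.pi_pos
  obtain ⟨k, hk⟩ := pmi_cos_pos_mem c (hcos 0)
  refine ⟨k, ?_⟩
  set S : Set unitInterval :=
    h ⁻¹' (Ioo (c + 2*k*Real.pi - Real.pi/2) (c + 2*k*Real.pi + Real.pi/2)) with hS
  have hopen : IsOpen S := isOpen_Ioo.preimage hc
  have hcompl : Sᶜ = h ⁻¹' (⋃ m : {m : ℤ // m ≠ k},
      Ioo (c + 2*(m:ℤ)*Real.pi - Real.pi/2) (c + 2*(m:ℤ)*Real.pi + Real.pi/2)) := by
    ext x
    simp only [hS, mem_compl_iff, mem_preimage, mem_iUnion]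
    constructor
    · intro hx
      obtain ⟨m, hm⟩ := pmi_cos_pos_mem c (hcos x)
      have hmk : m ≠ k := by rintro rfl; exact hx hm
      exact ⟨⟨m, hmk⟩, hm⟩
    · rintro ⟨⟨m, hmk⟩, hm⟩ hx
      have hm' : h x ∈ Ioo (c + 2*(m:ℝ)*Real.pi - Real.pi/2)
          (c + 2*(m:ℝ)*Real.pi + Real.pi/2) := hm
      have h1 : |(c + 2*(m:ℝ)*Real.pi) - (c + 2*(k:ℝ)*Real.pi)| < Real.pi :=
        pmi_corner hm' hx
      rw [abs_lt] at h1
      apply hmk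
      have hl : (-1 : ℤ) < m - k := by
        have : (-1:ℝ) < ((m - k : ℤ) : ℝ) := by push_cast; nlinarith [h1.1]
        exact_mod_cast this
      have hr : (m - k : ℤ) < 1 := by
        have : ((m - k : ℤ) : ℝ) < 1 := by push_cast; nlinarith [h1.2]
        exact_mod_cast this
      omega
  have hclosed : IsClosed S := by
    rw [← isOpen_compl_iff, hcompl]
    exact (isOpen_iUnion fun m => isOpen_Ioo).preimage hc
  have huniv : S = univ := IsClopen.eq_univ ⟨hclosed, hopen⟩ ⟨0, hk⟩
  intro x
  have : x ∈ S := huniv ▸ mem_univ x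
  exact this

private lemma pmi_lift (F : ℝ × ℝ → ℂ) (hF : Continuous F) (hne : ∀ p, F p ≠ 0)
    (hUC : UniformContinuous F) (ε : ℝ) (hε : 0 < ε)
    (hlow : ∀ p, ε ≤ ‖F p‖) :
    ∃ θ : unitInterval × unitInterval → ℝ, Continuous θ ∧
      ∀ p : unitInterval × unitInterval,
        F ((p.1 : ℝ), (p.2 : ℝ)) =
          (‖F ((p.1 : ℝ), (p.2 : ℝ))‖ : ℂ) * Complex.exp (θ p * Complex.I) := by
  obtain ⟨δ, hδ, hδ'⟩ := Metric.uniformContinuous_iff.mp hUC ε hε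
  obtain ⟨n, hn⟩ := exists_nat_gt (1/δ)
  have hn0 : 0 < (n:ℝ) := lt_trans (by positivity) hn
  have hn0' : (n:ℝ) ≠ 0 := ne_of_gt hn0
  have hinv : 1/(n:ℝ) < δ := by
    rw [div_lt_iff₀ hn0]
    have := (div_lt_iff₀ hδ).mp hn
    linarith
  set v : ℕ → unitInterval × unitInterval → ℝ × ℝ :=
    fun k p => (((k:ℝ)/n) * (p.1 : ℝ), ((k:ℝ)/n) * (p.2 : ℝ)) with hv
  have hstep : ∀ (p : unitInterval × unitInterval) (k : ℕ),
      dist (v (k+1) p) (v k p) < δ := by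
    intro p k
    rw [Prod.dist_eq]
    have key : ∀ x : unitInterval,
        dist (((k+1:ℕ):ℝ)/n * (x:ℝ)) ((k:ℝ)/n * (x:ℝ)) ≤ 1/(n:ℝ) := by
      intro x
      rw [Real.dist_eq]
      have e : ((k+1:ℕ):ℝ)/n * (x:ℝ) - (k:ℝ)/n * (x:ℝ) = (x:ℝ)/n := by
        push_cast; field_simp; ring
      rw [e, _root_.abs_of_nonneg (div_nonneg x.2.1 hn0.le)]
      gcongr
      exact x.2.2
    exact lt_of_le_of_lt (max_le (key p.1) (key p.2)) hinv
  have hratio : ∀ (p : unitInterval × unitInterval) (k : ℕ),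
      ‖F (v (k+1) p) / F (v k p) - 1‖ < 1 := by
    intro p k
    have hz := hne (v k p)
    have habs : (0:ℝ) < ‖F (v k p)‖ := by
      simpa [norm_pos_iff] using hz
    have e : F (v (k+1) p) / F (v k p) - 1 = (F (v (k+1) p) - F (v k p)) / F (v k p) := by
      field_simp
    rw [e, norm_div, div_lt_one habs]
    calc ‖F (v (k+1) p) - F (v k p)‖ = dist (F (v (k+1) p)) (F (v k p)) := by
          rw [Complex.dist_eq]
      _ < ε := hδ' (hstep p k)
      _ ≤ _ := hlow _
  have hslit : ∀ (p : unitInterval × unitInterval) (k : ℕ),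
      F (v (k+1) p) / F (v k p) ∈ Complex.slitPlane := by
    intro p k
    rw [Complex.mem_slitPlane_iff]
    left
    have h1 := hratio p k
    have h2 : |(F (v (k+1) p) / F (v k p) - 1).re| ≤
        ‖F (v (k+1) p) / F (v k p) - 1‖ := Complex.abs_re_le_norm _
    have h3 : (F (v (k+1) p) / F (v k p) - 1).re =
        (F (v (k+1) p) / F (v k p)).re - 1 := by simp
    rw [h3] at h2
    have := abs_le.mp h2
    linarith [this.1]
  have hvcont : ∀ k, Continuous (v k) := by
    intro k
    apply Continuous.prodMk
    · exact continuous_const.mul (continuous_subtype_val.comp continuous_fst)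
    · exact continuous_const.mul (continuous_subtype_val.comp continuous_snd)
  set A : unitInterval × unitInterval → ℕ → ℝ := fun p k =>
    Complex.arg (F (0, 0)) +
      ∑ j ∈ Finset.range k, Complex.arg (F (v (j+1) p) / F (v j p)) with hA
  have hratio_cont : ∀ k, Continuous fun p => F (v (k+1) p) / F (v k p) := fun k =>
    (hF.comp (hvcont (k+1))).div (hF.comp (hvcont k)) (fun p => hne _)
  have hθcont : Continuous fun p => A p n := by
    apply continuous_const.add
    apply continuous_finset_sum
    intro k _
    rw [continuous_iff_continuousAt]
    intro p
    exact ContinuousAt.comp (g := Complex.arg)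
      (Complex.continuousAt_arg (hslit p k)) ((hratio_cont k).continuousAt)
  refine ⟨fun p => A p n, hθcont, ?_⟩
  intro p
  have key : ∀ k : ℕ, F (v k p) = (‖F (v k p)‖ : ℂ) *
      Complex.exp ((A p k : ℝ) * Complex.I) := by
    intro k
    induction k with
    | zero =>
      have hv0 : v 0 p = (0, 0) := by simp [hv]
      have hA0 : A p 0 = Complex.arg (F (0, 0)) := by simp [hA]
      rw [hv0, hA0]
      exact (Complex.norm_mul_exp_arg_mul_I _).symm
    | succ k ih =>
      set z := F (v k p) with hzdef
      set w := F (v (k+1) p) with hwdef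
      have hz : z ≠ 0 := hne _
      have hw : w ≠ 0 := hne _
      have hza : (‖z‖ : ℂ) ≠ 0 := by
        simpa [Complex.ofReal_eq_zero, norm_eq_zero] using hz
      have hwa : (‖w‖ : ℂ) ≠ 0 := by
        simpa [Complex.ofReal_eq_zero, norm_eq_zero] using hw
      have hr : (‖w / z‖ : ℂ) * Complex.exp (Complex.arg (w / z) * Complex.I)
          = w / z := Complex.norm_mul_exp_arg_mul_I _
      have habsdiv : (‖w / z‖ : ℂ) = (‖w‖ : ℂ) / (‖z‖ : ℂ) := by
        rw [norm_div]; push_cast; ring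
      have hAstep : A p (k+1) = A p k + Complex.arg (w / z) := by
        simp [hA, Finset.sum_range_succ]; ring
      rw [hAstep, Complex.ofReal_add, add_mul, Complex.exp_add]
      have hE : Complex.exp ((A p k : ℝ) * Complex.I) = z / (‖z‖ : ℂ) := by
        rw [eq_div_iff hza, mul_comm]
        exact ih.symm
      have hE2 : Complex.exp (Complex.arg (w / z) * Complex.I)
          = (w / z) / ((‖w‖ : ℂ) / (‖z‖ : ℂ)) := by
        rw [← habsdiv, eq_div_iff (by rw [habsdiv]; exact div_ne_zero hwa hza), mul_comm]
        exact hr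
      rw [hE, hE2]
      field_simp
  have hvn : v n p = ((p.1 : ℝ), (p.2 : ℝ)) := by
    simp [hv, div_self hn0']
  have := key n
  rw [hvn] at this
  exact this


/-- Lemma 5.3: a path crossing the strip `[−M,M] × [−C,C]` horizontally must
meet any path crossing it vertically inside the open strip. -/
theorem paths_must_intersect (M C : ℝ) (hM : 0 ≤ M) (hC : 0 ≤ C)
    (γ₁ γ₂ : unitInterval → ℝ × ℝ)
    (hcont₁ : Continuous γ₁) (hcont₂ : Continuous γ₂)
    (a₁ b₁ a₂ b₂ : ℝ)
    (hγ₂0 : γ₂ 0 = (-M, 0)) (hγ₂1 : γ₂ 1 = (M, 0))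
    (hγ₂range : ∀ t, γ₂ t ∈ Icc (-M) M ×ˢ Icc (-C) C)
    (hγ₁0 : γ₁ 0 = (a₁, b₁)) (hγ₁1 : γ₁ 1 = (a₂, b₂))
    (hγ₁range : ∀ t, (γ₁ t).1 ∈ Ioo (-M) M)
    (hb₁ : b₁ < -C) (hb₂ : C < b₂) :
    ∃ s t : unitInterval, γ₁ s = γ₂ t := by
  by_contra hcon
  push_neg at hcon
  have hπ := Real.pi_pos
  -- the difference function, as a complex number
  set f : unitInterval × unitInterval → ℂ := fun p =>
    (((γ₁ p.1).1 - (γ₂ p.2).1 : ℝ) : ℂ) + (((γ₁ p.1).2 - (γ₂ p.2).2 : ℝ) : ℂ) * Complex.I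
    with hf
  have hfre : ∀ p, (f p).re = (γ₁ p.1).1 - (γ₂ p.2).1 := by intro p; simp [hf]
  have hfim : ∀ p, (f p).im = (γ₁ p.1).2 - (γ₂ p.2).2 := by intro p; simp [hf]
  have hfne : ∀ p, f p ≠ 0 := by
    intro p h
    apply hcon p.1 p.2
    have h1 := congrArg Complex.re h
    have h2 := congrArg Complex.im h
    rw [hfre] at h1
    rw [hfim] at h2
    simp only [Complex.zero_re, Complex.zero_im] at h1 h2
    exact Prod.ext (by linarith) (by linarith)
  have hfcont : Continuous f := by
    apply Continuous.add
    · exact Complex.continuous_ofReal.comp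
        ((continuous_fst.comp (hcont₁.comp continuous_fst)).sub
          (continuous_fst.comp (hcont₂.comp continuous_snd)))
    · exact (Complex.continuous_ofReal.comp
        ((continuous_snd.comp (hcont₁.comp continuous_fst)).sub
          (continuous_snd.comp (hcont₂.comp continuous_snd)))).mul continuous_const
  -- extend to the plane by clamping
  set g : ℝ × ℝ → unitInterval × unitInterval := fun q =>
    (projIcc 0 1 zero_le_one q.1, projIcc 0 1 zero_le_one q.2) with hg
  set F : ℝ × ℝ → ℂ := fun q => f (g q) with hF
  have hFf : ∀ p : unitInterval × unitInterval, F ((p.1 : ℝ), (p.2 : ℝ)) = f p := by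
    intro p
    simp [hF, hg, projIcc_val]
  have hFcont : Continuous F := hfcont.comp
    ((continuous_projIcc.comp continuous_fst).prodMk (continuous_projIcc.comp continuous_snd))
  have hFne : ∀ q, F q ≠ 0 := fun q => hfne _
  -- minimum modulus
  obtain ⟨p₀, -, hp₀⟩ := isCompact_univ.exists_isMinOn univ_nonempty
    ((continuous_norm.comp hfcont).continuousOn :
      ContinuousOn (fun p => ‖f p‖) univ)
  set ε : ℝ := ‖f p₀‖ with hε'
  have hε : 0 < ε := by
    rw [hε']
    exact norm_pos_iff.mpr (hfne p₀)
  have hlow : ∀ q, ε ≤ ‖F q‖ := fun q => hp₀ (mem_univ (g q))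
  -- uniform continuity
  have hproj : UniformContinuous (projIcc (0:ℝ) 1 zero_le_one) := by
    rw [Metric.uniformContinuous_iff]
    intro e he
    refine ⟨e, he, fun {a b} hab => lt_of_le_of_lt ?_ hab⟩
    rw [Subtype.dist_eq, coe_projIcc, coe_projIcc, Real.dist_eq, Real.dist_eq]
    calc |max 0 (min 1 a) - max 0 (min 1 b)| = |max (min 1 a) 0 - max (min 1 b) 0| := by
          rw [max_comm 0, max_comm 0]
      _ ≤ |min 1 a - min 1 b| := abs_max_sub_max_le_abs _ _ _
      _ ≤ max |(1:ℝ) - 1| |a - b| := abs_min_sub_min_le_max _ _ _ _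
      _ = |a - b| := by simp
  have hgUC : UniformContinuous g :=
    UniformContinuous.prodMk (hproj.comp uniformContinuous_fst)
      (hproj.comp uniformContinuous_snd)
  have hUC : UniformContinuous F :=
    (CompactSpace.uniformContinuous_of_continuous hfcont).comp hgUC
  -- the angle lift
  obtain ⟨θ, hθcont, hθ⟩ := pmi_lift F hFcont hFne hUC ε hε hlow
  have hθ' : ∀ p, f p = (‖f p‖ : ℂ) * Complex.exp (θ p * Complex.I) := by
    intro p
    have := hθ p
    rwa [hFf p] at this
  have habs_pos : ∀ p, 0 < ‖f p‖ := fun p => norm_pos_iff.mpr (hfne p)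
  have hre_eq : ∀ p, (f p).re = ‖f p‖ * Real.cos (θ p) := by
    intro p
    conv_lhs => rw [hθ' p]
    simp [Complex.exp_mul_I, Complex.mul_re, Complex.add_re, Complex.mul_im, Complex.cos_ofReal_re, Complex.sin_ofReal_re]
  have him_eq : ∀ p, (f p).im = ‖f p‖ * Real.sin (θ p) := by
    intro p
    conv_lhs => rw [hθ' p]
    simp [Complex.exp_mul_I, Complex.mul_im, Complex.add_im, Complex.mul_re, Complex.cos_ofReal_re, Complex.sin_ofReal_re]
  -- edge conditions
  -- bottom edge t = 0 : re > 0, c = 0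
  have hedge0 : ∀ s : unitInterval, 0 < Real.cos (θ (s, 0) - 0) := by
    intro s
    rw [sub_zero]
    have h1 : 0 < (f (s, 0)).re := by
      rw [hfre, hγ₂0]
      have := (hγ₁range s).1
      simp only
      linarith
    rw [hre_eq] at h1
    nlinarith [habs_pos (s, (0:unitInterval))]
  -- right edge s = 1 : im > 0, c = π/2
  have hedge1 : ∀ t : unitInterval, 0 < Real.cos (θ (1, t) - Real.pi/2) := by
    intro t
    rw [Real.cos_sub_pi_div_two]
    have h1 : 0 < (f (1, t)).im := by
      rw [hfim, hγ₁1]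
      have := ((hγ₂range t).2 : (γ₂ t).2 ∈ Icc (-C) C).2
      simp only
      linarith
    rw [him_eq] at h1
    nlinarith [habs_pos ((1:unitInterval), t)]
  -- top edge t = 1 : re < 0, c = π
  have hedge2 : ∀ s : unitInterval, 0 < Real.cos (θ (s, 1) - Real.pi) := by
    intro s
    rw [Real.cos_sub_pi]
    have h1 : (f (s, 1)).re < 0 := by
      rw [hfre, hγ₂1]
      have := (hγ₁range s).2
      simp only
      linarith
    rw [hre_eq] at h1
    nlinarith [habs_pos (s, (1:unitInterval))]
  -- left edge s = 0 : im < 0, c = -π/2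
  have hedge3 : ∀ t : unitInterval, 0 < Real.cos (θ (0, t) - (-(Real.pi/2))) := by
    intro t
    rw [sub_neg_eq_add, Real.cos_add_pi_div_two]
    have h1 : (f (0, t)).im < 0 := by
      rw [hfim, hγ₁0]
      have := ((hγ₂range t).2 : (γ₂ t).2 ∈ Icc (-C) C).1
      simp only
      linarith
    rw [him_eq] at h1
    nlinarith [habs_pos ((0:unitInterval), t)]
  -- apply the edge lemma
  have hc0 : Continuous fun s : unitInterval => θ (s, 0) :=
    hθcont.comp (continuous_id.prodMk continuous_const)
  have hc1 : Continuous fun t : unitInterval => θ (1, t) :=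
    hθcont.comp (continuous_const.prodMk continuous_id)
  have hc2 : Continuous fun s : unitInterval => θ (s, 1) :=
    hθcont.comp (continuous_id.prodMk continuous_const)
  have hc3 : Continuous fun t : unitInterval => θ (0, t) :=
    hθcont.comp (continuous_const.prodMk continuous_id)
  obtain ⟨k₀, hk₀⟩ := pmi_edge hc0 0 hedge0
  obtain ⟨k₁, hk₁⟩ := pmi_edge hc1 (Real.pi/2) hedge1
  obtain ⟨k₂, hk₂⟩ := pmi_edge hc2 Real.pi hedge2
  obtain ⟨k₃, hk₃⟩ := pmi_edge hc3 (-(Real.pi/2)) hedge3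
  -- corners
  have A := pmi_corner (hk₀ 0) (hk₃ 0)
  have B := pmi_corner (hk₀ 1) (hk₁ 0)
  have Cc := pmi_corner (hk₁ 1) (hk₂ 1)
  have D := pmi_corner (hk₂ 0) (hk₃ 1)
  rw [abs_lt] at A B Cc D
  have e1 : k₀ = k₃ := by
    have h1 : ((k₀ - k₃ : ℤ):ℝ) < 1 := by push_cast; nlinarith [A.2]
    have h2 : (-1:ℝ) < ((k₀ - k₃ : ℤ):ℝ) := by push_cast; nlinarith [A.1]
    have h1' : (k₀ - k₃ : ℤ) < 1 := by exact_mod_cast h1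
    have h2' : (-1:ℤ) < k₀ - k₃ := by exact_mod_cast h2
    omega
  have e2 : k₀ = k₁ := by
    have h1 : ((k₀ - k₁ : ℤ):ℝ) < 1 := by push_cast; nlinarith [B.2]
    have h2 : (-1:ℝ) < ((k₀ - k₁ : ℤ):ℝ) := by push_cast; nlinarith [B.1]
    have h1' : (k₀ - k₁ : ℤ) < 1 := by exact_mod_cast h1
    have h2' : (-1:ℤ) < k₀ - k₁ := by exact_mod_cast h2
    omega
  have e3 : k₁ = k₂ := by
    have h1 : ((k₁ - k₂ : ℤ):ℝ) < 1 := by push_cast; nlinarith [Cc.2]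
    have h2 : (-1:ℝ) < ((k₁ - k₂ : ℤ):ℝ) := by push_cast; nlinarith [Cc.1]
    have h1' : (k₁ - k₂ : ℤ) < 1 := by exact_mod_cast h1
    have h2' : (-1:ℤ) < k₁ - k₂ := by exact_mod_cast h2
    omega
  -- final contradiction at corner (0, 1)
  have hk23 : (k₂ : ℝ) = k₃ := by
    have : k₂ = k₃ := by omega
    exact_mod_cast this
  rw [hk23] at D
  -- D : -π < (π + 2k₃π) - (-(π/2) + 2k₃π) < π, i.e. |3π/2| < π
  have : (Real.pi + 2*(k₃:ℝ)*Real.pi) - (-(Real.pi/2) + 2*(k₃:ℝ)*Real.pi) = 3*Real.pi/2 := by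
    ring
  rw [this] at D
  linarith [D.2]
end

section
/- Let A be a 2×2 integer matrix with determinant 1 and |trace A| > 2, and let f̃ : ℝ² → ℝ² be a homeomorphism satisfying f̃(x + v) = f̃(x) + A v for all x ∈ ℝ² and v ∈ ℤ². Then for every nonzero vector v ∈ ℚ² and every ρ ∈ ℝ², the quantity |⟨f̃ⁿ(x) − x − n•ρ, v⟩| is unbounded over x ∈ ℝ² and n ∈ ℕ; in particular, f̃ does not have bounded deviation from any nonzero rational vector. -/
open Metric Set Filter Topology

noncomputable section

theorem exists_int_big (c C M : ℝ) (hc : c ≠ 0) : ∃ k : ℤ, M < |C + k * c| := by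
  obtain ⟨k0, hk0⟩ := exists_int_gt ((|M| + |C| + 1) / |c|)
  have hc' : 0 < |c| := abs_pos.2 hc
  have h1 : |M| + |C| + 1 < (k0 : ℝ) * |c| := by
    rw [div_lt_iff₀ hc'] at hk0; linarith
  refine ⟨if 0 < c then k0 else -k0, ?_⟩
  have h2 : ((if 0 < c then k0 else -k0 : ℤ) : ℝ) * c = (k0 : ℝ) * |c| := by
    split_ifs with h
    · rw [abs_of_pos h]
    · push_cast
      rw [abs_of_neg (lt_of_le_of_ne (not_lt.1 h) hc)]
      ring
  rw [h2]
  set t : ℝ := (k0 : ℝ) * |c| with ht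
  have h3 : |t| ≤ |C + t| + |C| := by
    have := abs_add_le (C + t) (-C)
    simpa using this
  have h4 : |t| = t := by
    rw [abs_of_pos]; nlinarith [abs_nonneg M, abs_nonneg C]
  nlinarith [abs_nonneg M, abs_nonneg C, le_abs_self M]

/-- A lift of a homeomorphism homotopic to a linear Anosov automorphism has
unbounded deviation from every nonzero rational direction. -/
theorem anosov_unbounded_deviation (A : Matrix (Fin 2) (Fin 2) ℤ)
    (hdet : A.det = 1) (htr : 2 < |A.trace|)
    (f : E2 ≃ₜ E2) (hf : IsLiftMat ⇑f A) :
    ∀ v : E2, v ≠ 0 → (∀ i, ∃ q : ℚ, v i = (q : ℝ)) →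
      ∀ (ρ : E2) (M : ℝ), ∃ (x : E2) (n : ℕ),
        M < |(inner ℝ ((⇑f)^[n] x - x - (n : ℝ) • ρ) v : ℝ)| := by
  
  intro v hv _ ρ M
  have hinner : ∀ y w : E2, (inner ℝ y w : ℝ) = y 0 * w 0 + y 1 * w 1 := by
    intro y w
    simp [PiLp.inner_apply, RCLike.inner_apply, conj_trivial, Fin.sum_univ_two]
    ring
  have hdet' : ((A 0 0 : ℝ)) * (A 1 1 : ℝ) - (A 0 1 : ℝ) * (A 1 0 : ℝ) = 1 := by
    rw [Matrix.det_fin_two] at hdet; exact_mod_cast hdet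
  have htr' : 2 < |(A 0 0 : ℝ) + (A 1 1 : ℝ)| := by
    rw [Matrix.trace_fin_two] at htr
    have h : ((2:ℤ):ℝ) < |((A 0 0 + A 1 1 : ℤ) : ℝ)| := by
      rw [← Int.cast_abs]; exact_mod_cast htr
    push_cast at h; convert h using 2
  have hne : (2 : ℝ) - ((A 0 0 : ℝ) + (A 1 1 : ℝ)) ≠ 0 := by
    intro h
    have h2 : (A 0 0 : ℝ) + (A 1 1 : ℝ) = 2 := by linarith
    rw [h2] at htr'; norm_num at htr'
  have hkey : ((A 0 0 : ℝ) - 1) * v 0 + (A 1 0 : ℝ) * v 1 ≠ 0 ∨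
      (A 0 1 : ℝ) * v 0 + ((A 1 1 : ℝ) - 1) * v 1 ≠ 0 := by
    by_contra h
    push_neg at h
    obtain ⟨h0, h1⟩ := h
    have e0 : ((2:ℝ) - ((A 0 0 : ℝ) + (A 1 1 : ℝ))) * v 0 = 0 := by
      linear_combination ((A 1 1 : ℝ) - 1) * h0 - (A 1 0 : ℝ) * h1 - v 0 * hdet'
    have e1 : ((2:ℝ) - ((A 0 0 : ℝ) + (A 1 1 : ℝ))) * v 1 = 0 := by
      linear_combination ((A 0 0 : ℝ) - 1) * h1 - (A 0 1 : ℝ) * h0 - v 1 * hdet'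
    have hv0 : v 0 = 0 := by
      rcases mul_eq_zero.1 e0 with h' | h'
      · exact absurd h' hne
      · exact h'
    have hv1 : v 1 = 0 := by
      rcases mul_eq_zero.1 e1 with h' | h'
      · exact absurd h' hne
      · exact h'
    apply hv
    ext i
    fin_cases i
    · exact hv0
    · exact hv1
  rcases hkey with hc | hc
  · obtain ⟨k, hk⟩ := exists_int_big _ ((f 0 0 - ρ 0) * v 0 + (f 0 1 - ρ 1) * v 1) M hc
    refine ⟨intVec ![k, 0], 1, ?_⟩
    have hfx : f (intVec ![k, 0]) = f 0 + intVec (A.mulVec ![k, 0]) := by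
      have := hf 0 ![k, 0]; rwa [zero_add] at this
    have key : (inner ℝ ((⇑f)^[1] (intVec ![k, 0]) - intVec ![k, 0] - ((1:ℕ) : ℝ) • ρ) v : ℝ)
        = ((f 0 0 - ρ 0) * v 0 + (f 0 1 - ρ 1) * v 1)
          + (k : ℝ) * (((A 0 0 : ℝ) - 1) * v 0 + (A 1 0 : ℝ) * v 1) := by
      rw [Function.iterate_one, hfx, hinner]
      simp [intVec, Matrix.mulVec, dotProduct, Fin.sum_univ_two]
      ring
    rw [key]
    exact hk
  · obtain ⟨k, hk⟩ := exists_int_big _ ((f 0 0 - ρ 0) * v 0 + (f 0 1 - ρ 1) * v 1) M hc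
    refine ⟨intVec ![0, k], 1, ?_⟩
    have hfx : f (intVec ![0, k]) = f 0 + intVec (A.mulVec ![0, k]) := by
      have := hf 0 ![0, k]; rwa [zero_add] at this
    have key : (inner ℝ ((⇑f)^[1] (intVec ![0, k]) - intVec ![0, k] - ((1:ℕ) : ℝ) • ρ) v : ℝ)
        = ((f 0 0 - ρ 0) * v 0 + (f 0 1 - ρ 1) * v 1)
          + (k : ℝ) * ((A 0 1 : ℝ) * v 0 + ((A 1 1 : ℝ) - 1) * v 1) := by
      rw [Function.iterate_one, hfx, hinner]
      simp [intVec, Matrix.mulVec, dotProduct, Fin.sum_univ_two]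
      ring
    rw [key]
    exact hk
end
end
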